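/- Let f be a superadditive set function and w a cut function (i.e., any posimodular normalised set function) on a finite set V, and set h = f + w. Suppose λ ≥ 0, α ≥ 1, β ≥ 0, and X, Y ⊆ V satisfy h(X) ≤ αλ and w(Y) ≤ βλ. Then h(X \ Y) + h(X ∩ Y) ≤ (α + 2β)λ. -/

import Mathlib

/-- Splitting a solution of a (bounded) Generalised Min-Cut objective `h = f + w`:
if `f` is superadditive, `w` is posimodular and normalised, `h X ≤ α·λ` and
`w Y ≤ β·λ`, then `h (X \ Y) + h (X ∩ Y) ≤ (α + 2β)·λ`. -/
theorem cut_splitting {V : Type*} [Fintype V] [DecidableEq V]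
    (f w : Finset V → WithTop ℚ)
    (hfempty : f ∅ = 0) (hfnonneg : ∀ X : Finset V, 0 ≤ f X)
    (hfsup : ∀ X Y : Finset V, Disjoint X Y → f X + f Y ≤ f (X ∪ Y))
    (hwempty : w ∅ = 0) (hwnonneg : ∀ X : Finset V, 0 ≤ w X)
    (hwpos : ∀ A B : Finset V, w (A \ B) + w (B \ A) ≤ w A + w B)
    (lam α β : ℚ) (hlam : 0 ≤ lam) (hα : 1 ≤ α) (hβ : 0 ≤ β)
    (X Y : Finset V)
    (hX : f X + w X ≤ ((α * lam : ℚ) : WithTop ℚ))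
    (hY : w Y ≤ ((β * lam : ℚ) : WithTop ℚ)) :
    (f (X \ Y) + w (X \ Y)) + (f (X ∩ Y) + w (X ∩ Y))
      ≤ (((α + 2 * β) * lam : ℚ) : WithTop ℚ) := by
  -- f part: f(X\Y) + f(X∩Y) ≤ f X
  have hfX : f (X \ Y) + f (X ∩ Y) ≤ f X := by
    have hdisj : Disjoint (X \ Y) (X ∩ Y) := by
      apply Finset.disjoint_left.mpr
      intro a ha hb
      exact (Finset.mem_sdiff.mp ha).2 (Finset.mem_inter.mp hb).2
    have := hfsup (X \ Y) (X ∩ Y) hdisj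
    rwa [Finset.sdiff_union_inter] at this
  -- posimodularity: w(X\Y) + w(Y\X) ≤ w X + w Y
  have h1 := hwpos X Y
  -- posimodularity with A = Y, B = Y \ X gives w(X∩Y) ≤ w Y + w(Y\X)
  have h2 : w (X ∩ Y) ≤ w Y + w (Y \ X) := by
    have := hwpos Y (Y \ X)
    have e1 : Y \ (Y \ X) = X ∩ Y := by
      ext a; simp [Finset.mem_sdiff, Finset.mem_inter, and_comm]
    have e2 : (Y \ X) \ Y = (∅ : Finset V) := by
      ext a; simp [Finset.mem_sdiff]
    rw [e1, e2, hwempty, add_zero] at this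
    exact this
  -- combine w parts: w(X\Y) + w(X∩Y) ≤ w X + w Y + w Y
  have hw2 : w (X \ Y) + w (X ∩ Y) ≤ w X + (w Y + w Y) := by
    calc w (X \ Y) + w (X ∩ Y) ≤ w (X \ Y) + (w Y + w (Y \ X)) :=
          add_le_add le_rfl h2
      _ = (w (X \ Y) + w (Y \ X)) + w Y := by abel
      _ ≤ (w X + w Y) + w Y := add_le_add h1 le_rfl
      _ = w X + (w Y + w Y) := by abel
  have key : (f (X \ Y) + w (X \ Y)) + (f (X ∩ Y) + w (X ∩ Y))
      ≤ (f X + w X) + (w Y + w Y) := by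
    calc (f (X \ Y) + w (X \ Y)) + (f (X ∩ Y) + w (X ∩ Y))
        = (f (X \ Y) + f (X ∩ Y)) + (w (X \ Y) + w (X ∩ Y)) := by abel
      _ ≤ f X + (w X + (w Y + w Y)) := add_le_add hfX hw2
      _ = (f X + w X) + (w Y + w Y) := by abel
  refine key.trans ?_
  rw [show (α + 2 * β) * lam = α * lam + (β * lam + β * lam) from by ring,
    WithTop.coe_add, WithTop.coe_add]
  exact add_le_add hX (add_le_add hY hY)
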